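/- For every integer n ≥ 2, the function p ↦ 1 + p² − p^{n+1} on [0,1] attains its maximum at p = (2/(n+1))^{1/(n−1)}, with maximum value cₙ := 1 + (2/(n+1))^{2/(n−1)}·((n−1)/(n+1)). Moreover, cₙ → 2 as n → ∞. -/

import Mathlib

noncomputable section

/-- `cₙ = 1 + (2/(n+1))^{2/(n−1)}·((n−1)/(n+1))`. -/
def cRatio (n : ℕ) : ℝ :=
  1 + (2 / ((n : ℝ) + 1)) ^ ((2 : ℝ) / ((n : ℝ) - 1)) * (((n : ℝ) - 1) / ((n : ℝ) + 1))

open Real Filter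

open Real

private lemma amgm_key {α q : ℝ} (hα : 0 < α) (hq0 : 0 ≤ q) (hq1 : q ≤ 1) :
    q ^ α * (1 - q) ≤ (α / (α + 1)) ^ α * (1 / (α + 1)) := by
  have hα1 : (0:ℝ) < α + 1 := by linarith
  set w₁ := α / (α + 1) with hw₁def
  set w₂ := 1 / (α + 1) with hw₂def
  have hw₁ : 0 < w₁ := div_pos hα hα1
  have hw₂ : 0 < w₂ := div_pos one_pos hα1
  have hsum : w₁ + w₂ = 1 := by rw [hw₁def, hw₂def]; field_simp
  have h1q : 0 ≤ 1 - q := by linarith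
  have h1 := Real.geom_mean_le_arith_mean2_weighted hw₁.le hw₂.le
      (div_nonneg hq0 hw₁.le) (div_nonneg h1q hw₂.le) hsum
  have hrhs : w₁ * (q / w₁) + w₂ * ((1 - q) / w₂) = 1 := by
    field_simp; ring
  rw [hrhs] at h1
  have h2 : ((q / w₁) ^ w₁ * ((1 - q) / w₂) ^ w₂) ^ (α + 1) ≤ 1 :=
    Real.rpow_le_one (by positivity) h1 hα1.le
  have h3 : ((q / w₁) ^ w₁ * ((1 - q) / w₂) ^ w₂) ^ (α + 1)
      = (q / w₁) ^ α * ((1 - q) / w₂) := by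
    rw [Real.mul_rpow (by positivity) (by positivity),
      ← Real.rpow_mul (by positivity), ← Real.rpow_mul (by positivity)]
    have e1 : w₁ * (α + 1) = α := by rw [hw₁def]; field_simp
    have e2 : w₂ * (α + 1) = 1 := by rw [hw₂def]; field_simp
    rw [e1, e2, Real.rpow_one]
  rw [h3] at h2
  have h4 : q ^ α * (1 - q) = ((q / w₁) ^ α * ((1 - q) / w₂)) * (w₁ ^ α * w₂) := by
    rw [Real.div_rpow hq0 hw₁.le]
    field_simp
  rw [h4]
  calc ((q / w₁) ^ α * ((1 - q) / w₂)) * (w₁ ^ α * w₂)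
      ≤ 1 * (w₁ ^ α * w₂) := by
        apply mul_le_mul_of_nonneg_right h2 (by positivity)
    _ = w₁ ^ α * w₂ := one_mul _


private lemma partA (n : ℕ) (hn : 2 ≤ n) (p : ℝ) (hp : p ∈ Set.Icc (0:ℝ) 1) :
    1 + p ^ 2 - p ^ (n + 1) ≤ cRatio n := by
  obtain ⟨hp0, hp1⟩ := hp
  have hs2 : (2:ℝ) ≤ (n:ℝ) := by exact_mod_cast hn
  have hs1 : (0:ℝ) < (n:ℝ) - 1 := by linarith
  have hsp : (0:ℝ) < (n:ℝ) + 1 := by linarith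
  set α : ℝ := 2 / ((n:ℝ) - 1) with hαdef
  have hα : 0 < α := div_pos two_pos hs1
  have hcast : ((n - 1 : ℕ) : ℝ) = (n:ℝ) - 1 := by
    have : 1 ≤ n := by omega
    push_cast [this]; ring
  have hq0 : 0 ≤ p ^ (n - 1) := pow_nonneg hp0 _
  have hq1 : p ^ (n - 1) ≤ 1 := pow_le_one₀ hp0 hp1
  -- p^2 = (p^(n-1))^α
  have hp2 : (p ^ (n - 1)) ^ α = p ^ 2 := by
    rw [← Real.rpow_natCast p (n - 1), ← Real.rpow_mul hp0, ← Real.rpow_natCast p 2]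
    congr 1
    rw [hcast, hαdef]
    field_simp; norm_num
  -- p^(n+1) = p^2 * p^(n-1)
  have hpn : p ^ (n + 1) = p ^ 2 * p ^ (n - 1) := by
    rw [← pow_add]
    congr 1
    omega
  have key := amgm_key hα hq0 hq1
  rw [hp2] at key
  have hw1 : α / (α + 1) = 2 / ((n:ℝ) + 1) := by
    rw [hαdef]; field_simp; ring
  have hw2 : 1 / (α + 1) = ((n:ℝ) - 1) / ((n:ℝ) + 1) := by
    rw [hαdef]; field_simp; ring
  rw [hw1, hw2, hαdef] at key
  have : p ^ 2 - p ^ (n + 1) = p ^ 2 * (1 - p ^ (n - 1)) := by rw [hpn]; ring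
  unfold cRatio
  linarith [key, this]

private lemma partB (n : ℕ) (hn : 2 ≤ n) :
    (2 / ((n : ℝ) + 1)) ^ ((1 : ℝ) / ((n : ℝ) - 1)) ∈ Set.Icc (0:ℝ) 1 := by
  have hs2 : (2:ℝ) ≤ (n:ℝ) := by exact_mod_cast hn
  have hs1 : (0:ℝ) < (n:ℝ) - 1 := by linarith
  constructor
  · exact Real.rpow_nonneg (by positivity) _
  · exact Real.rpow_le_one (by positivity) (by rw [div_le_one (by linarith)]; linarith)
      (div_nonneg zero_le_one hs1.le)

private lemma partC (n : ℕ) (hn : 2 ≤ n) :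
    1 + ((2 / ((n : ℝ) + 1)) ^ ((1 : ℝ) / ((n : ℝ) - 1))) ^ 2 -
        ((2 / ((n : ℝ) + 1)) ^ ((1 : ℝ) / ((n : ℝ) - 1))) ^ (n + 1) = cRatio n := by
  have hs2 : (2:ℝ) ≤ (n:ℝ) := by exact_mod_cast hn
  have hs1 : (0:ℝ) < (n:ℝ) - 1 := by linarith
  have hsp : (0:ℝ) < (n:ℝ) + 1 := by linarith
  set x : ℝ := 2 / ((n:ℝ) + 1) with hxdef
  have hx : 0 < x := by positivity
  have h2 : (x ^ ((1:ℝ) / ((n:ℝ) - 1))) ^ 2 = x ^ ((2:ℝ) / ((n:ℝ) - 1)) := by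
    rw [← Real.rpow_natCast (x ^ ((1:ℝ) / ((n:ℝ) - 1))) 2, ← Real.rpow_mul hx.le]
    congr 1
    push_cast
    ring
  have hn1 : (x ^ ((1:ℝ) / ((n:ℝ) - 1))) ^ (n + 1)
      = x ^ ((2:ℝ) / ((n:ℝ) - 1)) * x := by
    rw [← Real.rpow_natCast (x ^ ((1:ℝ) / ((n:ℝ) - 1))) (n + 1), ← Real.rpow_mul hx.le]
    have he : (1:ℝ) / ((n:ℝ) - 1) * ((n + 1 : ℕ) : ℝ) = (2:ℝ) / ((n:ℝ) - 1) + 1 := by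
      push_cast
      field_simp
      ring
    rw [he, Real.rpow_add hx, Real.rpow_one]
  have h1x : ((n:ℝ) - 1) / ((n:ℝ) + 1) = 1 - x := by
    rw [hxdef]; field_simp; ring
  unfold cRatio
  rw [h2, hn1, h1x]
  ring

private lemma partD : Filter.Tendsto cRatio Filter.atTop (nhds 2) := by
  have hT1 : Tendsto (fun n : ℕ => (n:ℝ) + 1) atTop atTop :=
    tendsto_atTop_add_const_right _ 1 tendsto_natCast_atTop_atTop
  have hT2 : Tendsto (fun n : ℕ => (n:ℝ) - 1) atTop atTop :=
    tendsto_atTop_add_const_right _ (-1) tendsto_natCast_atTop_atTop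
  -- log(n+1)/(n+1) → 0
  have L1 : Tendsto (fun n : ℕ => Real.log ((n:ℝ) + 1) / ((n:ℝ) + 1)) atTop (nhds 0) :=
    (Real.isLittleO_log_id_atTop.tendsto_div_nhds_zero).comp hT1
  -- (n+1)/(n-1) → 1
  have L2 : Tendsto (fun n : ℕ => ((n:ℝ) + 1) / ((n:ℝ) - 1)) atTop (nhds 1) := by
    have h0 : Tendsto (fun n : ℕ => 1 + 2 / ((n:ℝ) - 1)) atTop (nhds 1) := by
      have := Filter.Tendsto.div_atTop (tendsto_const_nhds (x := (2:ℝ))) hT2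
      simpa using tendsto_const_nhds.add this
    apply h0.congr'
    filter_upwards [eventually_ge_atTop 2] with n hn
    have hs : (2:ℝ) ≤ (n:ℝ) := by exact_mod_cast hn
    have hne : (n:ℝ) - 1 ≠ 0 := by linarith
    field_simp
    ring
  -- log(n+1)/(n-1) → 0
  have L3 : Tendsto (fun n : ℕ => Real.log ((n:ℝ) + 1) / ((n:ℝ) - 1)) atTop (nhds 0) := by
    have := L1.mul L2
    rw [zero_mul] at this
    apply this.congr
    intro n
    have hb : (n:ℝ) + 1 ≠ 0 := by positivity
    rw [div_mul_div_comm, mul_comm (Real.log ((n:ℝ) + 1)) ((n:ℝ) + 1),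
      mul_div_mul_left _ _ hb]
  -- exponent → 0
  have hA : Tendsto (fun n : ℕ => Real.log (2 / ((n:ℝ) + 1)) * (2 / ((n:ℝ) - 1)))
      atTop (nhds 0) := by
    have e1 : ∀ n : ℕ, Real.log (2 / ((n:ℝ) + 1)) * (2 / ((n:ℝ) - 1))
        = (2 * Real.log 2) / ((n:ℝ) - 1) - 2 * (Real.log ((n:ℝ) + 1) / ((n:ℝ) - 1)) := by
      intro n
      have hb : (n:ℝ) + 1 ≠ 0 := by positivity
      rw [Real.log_div two_ne_zero hb]
      ring
    have h1 : Tendsto (fun n : ℕ => (2 * Real.log 2) / ((n:ℝ) - 1)) atTop (nhds 0) :=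
      Filter.Tendsto.div_atTop tendsto_const_nhds hT2
    have h2 := h1.sub (L3.const_mul 2)
    norm_num at h2
    exact (h2.congr fun n => (e1 n).symm)
  have hExp : Tendsto (fun n : ℕ => Real.exp (Real.log (2 / ((n:ℝ) + 1)) * (2 / ((n:ℝ) - 1))))
      atTop (nhds 1) := by
    have := (Real.continuous_exp.tendsto 0).comp hA
    simpa [Function.comp_def] using this
  -- (n-1)/(n+1) → 1
  have hR : Tendsto (fun n : ℕ => ((n:ℝ) - 1) / ((n:ℝ) + 1)) atTop (nhds 1) := by
    have h0 : Tendsto (fun n : ℕ => 1 - 2 / ((n:ℝ) + 1)) atTop (nhds 1) := by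
      have := Filter.Tendsto.div_atTop (tendsto_const_nhds (x := (2:ℝ))) hT1
      simpa using tendsto_const_nhds.sub this
    apply h0.congr
    intro n
    have hb : (n:ℝ) + 1 ≠ 0 := by positivity
    field_simp
    ring
  have hfinal := tendsto_const_nhds (x := (1:ℝ)) |>.add (hExp.mul hR)
  rw [mul_one] at hfinal
  have : (1:ℝ) + 1 = 2 := by norm_num
  rw [this] at hfinal
  apply hfinal.congr
  intro n
  unfold cRatio
  rw [Real.rpow_def_of_pos (by positivity : (0:ℝ) < 2 / ((n:ℝ) + 1))]

/-- for every `n ≥ 2`, the function `p ↦ 1 + p² − p^{n+1}` on `[0,1]`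
attains its maximum at `p = (2/(n+1))^{1/(n−1)}`, with maximum value `cₙ`; moreover
`cₙ → 2` as `n → ∞`. -/
theorem max_one_add_sq_sub_pow_eq_cRatio :
    (∀ n : ℕ, 2 ≤ n →
      (∀ p ∈ Set.Icc (0:ℝ) 1, 1 + p ^ 2 - p ^ (n + 1) ≤ cRatio n) ∧
      (2 / ((n : ℝ) + 1)) ^ ((1 : ℝ) / ((n : ℝ) - 1)) ∈ Set.Icc (0:ℝ) 1 ∧
      1 + ((2 / ((n : ℝ) + 1)) ^ ((1 : ℝ) / ((n : ℝ) - 1))) ^ 2 -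
          ((2 / ((n : ℝ) + 1)) ^ ((1 : ℝ) / ((n : ℝ) - 1))) ^ (n + 1) = cRatio n) ∧
    Filter.Tendsto cRatio Filter.atTop (nhds 2) := by
  exact ⟨fun n hn => ⟨partA n hn, partB n hn, partC n hn⟩, partD⟩
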